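/- Let s be a rotation through angle 2π/m (m ≥ 2 an integer) of a Euclidean plane P, and let S ⊂ P be a finite s-invariant set not containing 0. If a half-plane {x : ⟨x, v⟩ > 0} (for some regular vector v, i.e., ⟨x,v⟩ ≠ 0 for all x ∈ S) is used to define the positive part S₊ of S, then the number of elements x ∈ S₊ with s(x) ∉ S₊ equals |S|/m. -/

import Mathlib

open Real

/-- Characterization of positivity of cosine. -/
lemma cosPosIff (t : ℝ) : 0 < Real.cos t ↔
    ∃ n : ℤ, -(π/2) + n*(2*π) < t ∧ t < π/2 + n*(2*π) := by
  constructor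
  · intro h
    set n : ℤ := round (t / (2*π)) with hn
    have h2π : (0:ℝ) < 2*π := by positivity
    have hb : |t/(2*π) - n| ≤ 1/2 := abs_sub_round _
    have hb' : |t - n*(2*π)| ≤ π := by
      have : t - n*(2*π) = (t/(2*π) - n) * (2*π) := by field_simp
      rw [this, abs_mul, abs_of_pos h2π]
      nlinarith [abs_nonneg (t/(2*π) - (n:ℝ))]
    have hcos : 0 < Real.cos (t - n*(2*π)) := by
      rw [Real.cos_sub_int_mul_two_pi]; exact h
    have habs : |t - n*(2*π)| < π/2 := by
      by_contra hc
      push_neg at hc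
      have : Real.cos |t - n*(2*π)| ≤ 0 :=
        Real.cos_nonpos_of_pi_div_two_le_of_le hc (by linarith)
      rw [Real.cos_abs] at this
      linarith
    rw [abs_lt] at habs
    exact ⟨n, by linarith, by linarith⟩
  · rintro ⟨n, h1, h2⟩
    have : Real.cos (t - n*(2*π)) = Real.cos t := Real.cos_sub_int_mul_two_pi t n
    rw [← this]
    exact Real.cos_pos_of_mem_Ioo ⟨by linarith, by linarith⟩

/-- Core real lemma: exactly one sign change per period. -/
lemma keyReal (m : ℕ) (hm : 2 ≤ m) (θ : ℝ)
    (hnz : ∀ j : ℤ, Real.cos (θ + j * (2*π/m)) ≠ 0) :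
    ∃! k : ℕ, k < m ∧ 0 < Real.cos (θ + k*(2*π/m)) ∧
      Real.cos (θ + (k+1)*(2*π/m)) < 0 := by
  have hm0 : (0:ℝ) < m := by positivity
  set α : ℝ := 2*π/m with hαdef
  have hα : 0 < α := by positivity
  set b : ℝ := (π/2 - θ)/α with hbdef
  have hbα : b * α = π/2 - θ := div_mul_cancel₀ _ (ne_of_gt hα)
  have hmα : (m:ℝ) * α = 2*π := by rw [hαdef]; field_simp [hm0.ne']
  have hm2 : (1:ℝ) ≤ (m:ℝ)/2 := by
    have : (2:ℝ) ≤ m := by exact_mod_cast hm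
    linarith
  -- E1 : positivity of cos at real multiples
  have E1 : ∀ r : ℝ, (0 < Real.cos (θ + r*α) ↔
      ∃ n : ℤ, b - (m:ℝ)/2 + m*n < r ∧ r < b + m*n) := by
    intro r
    rw [cosPosIff]
    constructor
    · rintro ⟨n, h1, h2⟩
      refine ⟨n, ?_, ?_⟩
      · have he : (b - (m:ℝ)/2 + m*n) * α = -(π/2) - θ + n*(2*π) := by
          linear_combination hbα + ((n:ℝ) - 1/2) * hmα
        have : (b - (m:ℝ)/2 + m*n) * α < r * α := by rw [he]; linarith
        exact lt_of_mul_lt_mul_right (by linarith) (le_of_lt hα)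
      · have he : (b + m*n) * α = π/2 - θ + n*(2*π) := by
          linear_combination hbα + (n:ℝ) * hmα
        have : r * α < (b + m*n) * α := by rw [he]; linarith
        exact lt_of_mul_lt_mul_right (by linarith) (le_of_lt hα)
    · rintro ⟨n, h1, h2⟩
      refine ⟨n, ?_, ?_⟩
      · have he : (b - (m:ℝ)/2 + m*n) * α = -(π/2) - θ + n*(2*π) := by
          linear_combination hbα + ((n:ℝ) - 1/2) * hmα
        have := (mul_lt_mul_iff_of_pos_right hα).mpr h1
        rw [he] at this; linarith
      · have he : (b + m*n) * α = π/2 - θ + n*(2*π) := by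
          linear_combination hbα + (n:ℝ) * hmα
        have := (mul_lt_mul_iff_of_pos_right hα).mpr h2
        rw [he] at this; linarith
  -- endpoints are never integers
  have E2 : ∀ n j : ℤ, (j:ℝ) ≠ b + m*n := by
    intro n j hj
    apply hnz j
    have : θ + (j:ℝ) * α = π/2 + n*(2*π) := by
      rw [hj]; linear_combination hbα + (n:ℝ)*hmα
    rw [this]
    have := Real.cos_add_int_mul_two_pi (π/2) n
    rw [show (n:ℝ)*(2*π) = π/2 + (n:ℝ)*(2*π) - π/2 by ring] at this
    rw [show π/2 + (n:ℝ)*(2*π) = π/2 + (n:ℝ)*(2*π) from rfl]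
    calc Real.cos (π/2 + (n:ℝ)*(2*π)) = Real.cos (π/2) := Real.cos_add_int_mul_two_pi (π/2) n
    _ = 0 := Real.cos_pi_div_two
  -- characterization of transitions
  have Tk : ∀ k : ℕ, ((0 < Real.cos (θ + k*α) ∧ Real.cos (θ + ((k:ℝ)+1)*α) < 0) ↔
      ∃ n : ℤ, (k:ℝ) < b + m*n ∧ b + m*n < (k:ℝ)+1) := by
    intro k
    constructor
    · rintro ⟨hp, hneg⟩
      obtain ⟨n, h1, h2⟩ := (E1 k).mp hp
      refine ⟨n, h2, ?_⟩
      rcases lt_trichotomy (b + m*n) ((k:ℝ)+1) with h | h | h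
      · exact h
      · exact absurd (by push_cast; linarith : ((((k:ℤ)+1):ℤ):ℝ) = b + m*n) (E2 n ((k:ℤ)+1))
      · exfalso
        have : 0 < Real.cos (θ + ((k:ℝ)+1)*α) := by
          rw [E1]; exact ⟨n, by linarith, h⟩
        linarith
    · rintro ⟨n, h1, h2⟩
      have hp : 0 < Real.cos (θ + k*α) := by
        rw [E1]; exact ⟨n, by linarith, h1⟩
      refine ⟨hp, ?_⟩
      have hne : Real.cos (θ + ((k:ℝ)+1)*α) ≠ 0 := by
        have h := hnz ((k:ℤ)+1)
        push_cast at h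
        exact h
      have hnp : ¬ (0 < Real.cos (θ + ((k:ℝ)+1)*α)) := by
        rw [E1]
        rintro ⟨n', h1', h2'⟩
        have hnn' : n < n' := by
          have : (m:ℝ)*n < (m:ℝ)*n' := by linarith
          exact_mod_cast lt_of_mul_lt_mul_left this (le_of_lt hm0)
        have : (n:ℝ) + 1 ≤ (n':ℝ) := by exact_mod_cast hnn'
        nlinarith
      exact lt_of_le_of_ne (not_lt.mp hnp) hne
  -- existence
  set n₀ : ℤ := -⌊b/(m:ℝ)⌋ with hn₀
  set c : ℝ := b + m*n₀ with hcdef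
  have hcfract : c = (m:ℝ) * Int.fract (b/(m:ℝ)) := by
    rw [hcdef, hn₀, Int.fract]
    push_cast
    field_simp
    ring
  have hc0 : 0 ≤ c := by
    rw [hcfract]; exact mul_nonneg (le_of_lt hm0) (Int.fract_nonneg _)
  have hcm : c < m := by
    rw [hcfract]
    nlinarith [Int.fract_lt_one (b/(m:ℝ))]
  have hcne : ∀ j : ℤ, (j:ℝ) ≠ c := fun j => E2 n₀ j
  have hfl1 : (⌊c⌋:ℝ) < c := lt_of_le_of_ne (Int.floor_le c) (hcne ⌊c⌋)
  have hfl2 : c < (⌊c⌋:ℝ) + 1 := Int.lt_floor_add_one c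
  have hflnn : 0 ≤ ⌊c⌋ := Int.floor_nonneg.mpr hc0
  have hkcast : ((⌊c⌋.toNat : ℕ) : ℝ) = (⌊c⌋:ℝ) := by
    exact_mod_cast Int.toNat_of_nonneg hflnn
  have hklt : ⌊c⌋.toNat < m := by
    have : ⌊c⌋ < (m:ℤ) := Int.floor_lt.mpr (by push_cast; exact hcm)
    omega
  refine ⟨⌊c⌋.toNat, ⟨hklt, (Tk _).mpr ⟨n₀, ?_, ?_⟩⟩, ?_⟩
  · rw [hkcast]; exact hfl1
  · rw [hkcast]; exact hfl2
  · rintro k' ⟨hk'm, htr'⟩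
    obtain ⟨n', h1', h2'⟩ := (Tk k').mp htr'
    have hk'mR : (k':ℝ) < m := by exact_mod_cast hk'm
    have hkmR : ((⌊c⌋.toNat:ℕ):ℝ) < m := by exact_mod_cast hklt
    rcases lt_trichotomy n' n₀ with h | h | h
    · exfalso
      have hcast : (n':ℝ) + 1 ≤ (n₀:ℝ) := by exact_mod_cast h
      have hmul : (m:ℝ)*n' + m ≤ (m:ℝ)*n₀ := by nlinarith
      have hce : c = b + (m:ℝ)*n₀ := hcdef
      have hk'nn : (0:ℝ) ≤ (k':ℝ) := Nat.cast_nonneg _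
      have hbig : (m:ℝ) < ((⌊c⌋.toNat:ℕ):ℝ) + 1 := by
        rw [hkcast]; linarith
      have : m < ⌊c⌋.toNat + 1 := by exact_mod_cast hbig
      omega
    · rw [h] at h1' h2'
      have e1 : ((⌊c⌋.toNat:ℕ):ℝ) < (k':ℝ) + 1 := by
        rw [hkcast]
        calc (⌊c⌋:ℝ) < c := hfl1
        _ = b + (m:ℝ)*n₀ := hcdef
        _ < (k':ℝ) + 1 := h2'
      have e2 : (k':ℝ) < ((⌊c⌋.toNat:ℕ):ℝ) + 1 := by
        rw [hkcast]
        calc (k':ℝ) < b + (m:ℝ)*n₀ := h1'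
        _ = c := hcdef.symm
        _ < (⌊c⌋:ℝ) + 1 := hfl2
      have e1' : ⌊c⌋.toNat < k' + 1 := by exact_mod_cast e1
      have e2' : k' < ⌊c⌋.toNat + 1 := by exact_mod_cast e2
      omega
    · exfalso
      have hcast : (n₀:ℝ) + 1 ≤ (n':ℝ) := by exact_mod_cast h
      have hmul : (m:ℝ)*n₀ + m ≤ (m:ℝ)*n' := by nlinarith
      have hce : c = b + (m:ℝ)*n₀ := hcdef
      have hgt : (m:ℝ) < (k':ℝ) + 1 := by linarith
      have : m < k' + 1 := by exact_mod_cast hgt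
      omega

open RealInnerProductSpace

theorem stmt11 {V : Type*} [NormedAddCommGroup V] [InnerProductSpace ℝ V]
    [Fact (Module.finrank ℝ V = 2)] (m : ℕ) (hm : 2 ≤ m)
    (o : Orientation ℝ V (Fin 2)) (s : V ≃ₗᵢ[ℝ] V)
    (hs : s = o.rotation ((2 * Real.pi / m : ℝ) : Real.Angle))
    (S : Set V) (hfin : S.Finite) (h0 : (0 : V) ∉ S)
    (hinv : ∀ x ∈ S, s x ∈ S)
    (hfree : ∀ x ∈ S, ∀ j : ℕ, 0 < j → j < m → (⇑s)^[j] x ≠ x)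
    (v : V) (hreg : ∀ x ∈ S, ⟪x, v⟫ ≠ 0) :
    {x ∈ S | 0 < ⟪x, v⟫ ∧ ⟪s x, v⟫ < 0}.ncard * m = S.ncard := by
  have hm0 : 0 < m := by omega
  have hmR : (0:ℝ) < m := by exact_mod_cast hm0
  set α : ℝ := 2 * Real.pi / m with hα
  have hiter : ∀ (k : ℕ) (x : V), (⇑s)^[k] x = o.rotation (((k:ℝ) * α : ℝ) : Real.Angle) x := by
    intro k
    induction k with
    | zero =>
      intro x
      simp [Orientation.rotation_zero]
    | succ n ih =>
      intro x
      rw [Function.iterate_succ_apply', ih, hs, Orientation.rotation_rotation]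
      congr 1
      rw [← Real.Angle.coe_add]
      congr 1
      push_cast
      ring
  have hsm : ∀ x : V, (⇑s)^[m] x = x := by
    intro x
    rw [hiter]
    have h2 : ((m:ℝ) * α : ℝ) = 2*Real.pi := by rw [hα]; field_simp [hmR.ne']
    rw [h2, Real.Angle.coe_two_pi, Orientation.rotation_zero]
    rfl
  have hsmf : (⇑s)^[m] = id := funext hsm
  have hmod : ∀ (a : ℕ) (x : V), (⇑s)^[a % m] x = (⇑s)^[a] x := by
    intro a x
    conv_rhs => rw [← Nat.mod_add_div a m]
    rw [Function.iterate_add_apply, Function.iterate_mul, hsmf, Function.iterate_id]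
    rfl
  have horb : ∀ x ∈ S, ∀ k : ℕ, (⇑s)^[k] x ∈ S := by
    intro x hx k
    induction k with
    | zero => exact hx
    | succ n ih => rw [Function.iterate_succ_apply']; exact hinv _ ih
  have huniq : ∀ x ∈ S, ∃! k : ℕ, k < m ∧ 0 < ⟪(⇑s)^[k] x, v⟫ ∧ ⟪(⇑s)^[k+1] x, v⟫ < 0 := by
    intro x hx
    set z : ℂ := ⟨⟪x, v⟫, ⟪o.rightAngleRotation x, v⟫⟩ with hz
    have hzne : z ≠ 0 := by
      intro h
      apply hreg x hx
      have := congrArg Complex.re h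
      simpa [hz] using this
    set r : ℝ := ‖z‖ with hr
    have hrpos : 0 < r := norm_pos_iff.mpr hzne
    set θ : ℝ := -(Complex.arg z) with hθ
    have key : ∀ k : ℕ, ⟪(⇑s)^[k] x, v⟫ = r * Real.cos (θ + (k:ℝ)*α) := by
      intro k
      rw [hiter, Orientation.rotation_apply, inner_add_left, real_inner_smul_left,
        real_inner_smul_left, Real.Angle.cos_coe, Real.Angle.sin_coe]
      have hre : r * Real.cos (Complex.arg z) = ⟪x, v⟫ := Complex.norm_mul_cos_arg z
      have him : r * Real.sin (Complex.arg z) = ⟪o.rightAngleRotation x, v⟫ :=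
        Complex.norm_mul_sin_arg z
      rw [show θ + (k:ℝ)*α = (k:ℝ)*α - Complex.arg z by rw [hθ]; ring, Real.cos_sub]
      linear_combination (-(Real.cos ((k:ℝ)*α))) * hre + (-(Real.sin ((k:ℝ)*α))) * him
    have hnz' : ∀ j : ℤ, Real.cos (θ + j * (2*Real.pi/m)) ≠ 0 := by
      intro j
      set k : ℕ := (j % (m:ℤ)).toNat with hk
      have hknn : 0 ≤ j % (m:ℤ) := Int.emod_nonneg j (by exact_mod_cast hm0.ne')
      have hkcast : ((k:ℕ):ℝ) = ((j % (m:ℤ) : ℤ):ℝ) := by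
        rw [hk]; exact_mod_cast Int.toNat_of_nonneg hknn
      have hjm : (j % (m:ℤ) + (m:ℤ) * (j / (m:ℤ)) : ℤ) = j := Int.emod_add_mul_ediv j m
      have hc : (k:ℝ) + (m:ℝ)*((j/(m:ℤ) : ℤ):ℝ) = (j:ℝ) := by
        rw [hkcast]; exact_mod_cast congrArg (Int.cast : ℤ → ℝ) hjm
      have hmα : (m:ℝ)*α = 2*Real.pi := by rw [hα]; field_simp [hmR.ne']
      have heq : θ + (j:ℝ) * (2*Real.pi/(m:ℝ)) = (θ + (k:ℝ)*α) + ((j / (m:ℤ) : ℤ):ℝ) * (2*Real.pi) := by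
        rw [show (2*Real.pi/(m:ℝ)) = α from rfl]
        linear_combination (-α) * hc + ((j/(m:ℤ):ℤ):ℝ) * hmα
      rw [heq, Real.cos_add_int_mul_two_pi]
      intro h0'
      have hkey := key k
      rw [h0', mul_zero] at hkey
      exact hreg _ (horb x hx k) hkey
    obtain ⟨k, ⟨hkm, hpos, hneg⟩, hu⟩ := keyReal m hm θ hnz'
    refine ⟨k, ⟨hkm, ?_, ?_⟩, ?_⟩
    · rw [key k]; exact mul_pos hrpos hpos
    · have hkk := key (k+1)
      push_cast at hkk
      rw [hkk]
      exact mul_neg_of_pos_of_neg hrpos hneg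
    · rintro k' ⟨hk'm, hp', hn'⟩
      apply hu
      refine ⟨hk'm, ?_, ?_⟩
      · rw [key k'] at hp'
        nlinarith
      · have hkk := key (k'+1)
        push_cast at hkk
        rw [hkk] at hn'
        nlinarith
  set T : Set V := {x ∈ S | 0 < ⟪x, v⟫ ∧ ⟪s x, v⟫ < 0} with hT
  set Φ : T × Fin m → S := fun p => ⟨(⇑s)^[(p.2 : ℕ)] (p.1 : V), horb _ p.1.2.1 _⟩ with hΦ
  have hbij : Function.Bijective Φ := by
    constructor
    · rintro ⟨⟨t, ht⟩, ⟨k, hk⟩⟩ ⟨⟨t', ht'⟩, ⟨k', hk'⟩⟩ h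
      have hval : (⇑s)^[k] t = (⇑s)^[k'] t' := congrArg Subtype.val h
      have htS : t ∈ S := ht.1
      have ht'S : t' ∈ S := ht'.1
      have htt' : t' = (⇑s)^[(m - k' + k) % m] t := by
        rw [hmod, Function.iterate_add_apply, hval, ← Function.iterate_add_apply,
          Nat.sub_add_cancel (le_of_lt hk'), hsm]
      obtain ⟨k₀, hk₀, hu₀⟩ := huniq t htS
      have h0eq : 0 = k₀ := by
        apply hu₀
        refine ⟨hm0, ?_, ?_⟩
        · simpa using ht.2.1
        · simpa using ht.2.2
      have hdeq : (m - k' + k) % m = k₀ := by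
        apply hu₀
        refine ⟨Nat.mod_lt _ hm0, ?_, ?_⟩
        · rw [← htt']; exact ht'.2.1
        · rw [Function.iterate_succ_apply', ← htt']; exact ht'.2.2
      have hd0 : (m - k' + k) % m = 0 := by omega
      have htt : t' = t := by rw [htt', hd0]; rfl
      have hval' : (⇑s)^[k] t = (⇑s)^[k'] t := by rw [htt] at hval; exact hval
      have hkk' : k = k' := by
        rcases lt_trichotomy k k' with hlt | heq | hgt
        · exfalso
          have hfix : (⇑s)^[m - k' + k] t = t := by
            rw [Function.iterate_add_apply, hval', ← Function.iterate_add_apply,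
              Nat.sub_add_cancel (le_of_lt hk'), hsm]
          exact hfree t htS (m - k' + k) (by omega) (by omega) hfix
        · exact heq
        · exfalso
          have hfix : (⇑s)^[m - k + k'] t = t := by
            rw [Function.iterate_add_apply, ← hval', ← Function.iterate_add_apply,
              Nat.sub_add_cancel (le_of_lt hk), hsm]
          exact hfree t htS (m - k + k') (by omega) (by omega) hfix
      simp only [Prod.mk.injEq, Subtype.mk.injEq, Fin.mk.injEq]
      exact ⟨htt.symm, hkk'⟩
    · rintro ⟨x, hx⟩
      obtain ⟨k, ⟨hkm, hp, hn⟩, -⟩ := huniq x hx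
      have htT : (⇑s)^[k] x ∈ T := by
        rw [Function.iterate_succ_apply'] at hn
        exact ⟨horb x hx k, hp, hn⟩
      refine ⟨⟨⟨_, htT⟩, ⟨(m - k) % m, Nat.mod_lt _ hm0⟩⟩, ?_⟩
      apply Subtype.ext
      show (⇑s)^[(m - k) % m] ((⇑s)^[k] x) = x
      rw [hmod, ← Function.iterate_add_apply, Nat.sub_add_cancel (le_of_lt hkm), hsm]
  have hcard := Nat.card_congr (Equiv.ofBijective Φ hbij)
  rw [Nat.card_prod, Nat.card_coe_set_eq, Nat.card_coe_set_eq,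
    Nat.card_eq_fintype_card, Fintype.card_fin] at hcard
  exact hcard
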